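/- Let X be a Markov chain on finite state space S, C_k ⊆ S a subset, and suppose the reduced (watched) chain on C_k — obtained by recording X only at successive visit times to C_k — has transition matrix equal to the stochastic complement S_kk = P_kk + P_{k*}(I − P_k)^{−1}P_{*k}. If the original kernel P is irreducible and stochastic, then S_kk is an irreducible stochastic matrix. -/

import Mathlib

open scoped BigOperators Matrix

namespace StochCompAux

lemma sum_pos_exists {α : Type*} {s : Finset α} {f : α → ℝ} (h0 : ∀ x ∈ s, 0 ≤ f x)
    (h : 0 < ∑ x ∈ s, f x) : ∃ x ∈ s, 0 < f x := by
  by_contra hc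
  push_neg at hc
  exact absurd (Finset.sum_nonpos fun x hx => (hc x hx)) (not_le.mpr h)

variable {α β γ : Type*} [Fintype β]

lemma mul_entry_nonneg (A : Matrix α β ℝ) (B : Matrix β γ ℝ)
    (hA : ∀ i j, 0 ≤ A i j) (hB : ∀ i j, 0 ≤ B i j) (i : α) (k : γ) :
    0 ≤ (A * B) i k := by
  rw [Matrix.mul_apply]
  exact Finset.sum_nonneg fun j _ => mul_nonneg (hA i j) (hB j k)

lemma entry_mul_le (A : Matrix α β ℝ) (B : Matrix β γ ℝ)
    (hA : ∀ i j, 0 ≤ A i j) (hB : ∀ i j, 0 ≤ B i j) (i : α) (j : β) (k : γ) :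
    A i j * B j k ≤ (A * B) i k := by
  rw [Matrix.mul_apply]
  exact Finset.single_le_sum (fun x _ => mul_nonneg (hA i x) (hB x k)) (Finset.mem_univ j)

lemma exists_pos_entry (A : Matrix α β ℝ) (B : Matrix β γ ℝ)
    (hA : ∀ i j, 0 ≤ A i j) (hB : ∀ i j, 0 ≤ B i j) {i : α} {k : γ}
    (h : 0 < (A * B) i k) : ∃ j, 0 < A i j ∧ 0 < B j k := by
  rw [Matrix.mul_apply] at h
  obtain ⟨x, -, hx⟩ := sum_pos_exists (fun x _ => mul_nonneg (hA i x) (hB x k)) h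
  rcases mul_pos_iff.mp hx with ⟨h1, h2⟩ | ⟨h1, h2⟩
  · exact ⟨x, h1, h2⟩
  · exact absurd h1 (not_lt.mpr (hA i x))

lemma pow_entry_nonneg {n : Type*} [Fintype n] [DecidableEq n] (A : Matrix n n ℝ)
    (hA : ∀ i j, 0 ≤ A i j) : ∀ (k : ℕ) (i j : n), 0 ≤ (A ^ k) i j := by
  intro k
  induction k with
  | zero => intro i j; rw [pow_zero, Matrix.one_apply]; split <;> norm_num
  | succ k ih => intro i j; rw [pow_succ]; exact mul_entry_nonneg _ _ ih hA i j

lemma entry_pos_of_pos_pos (A : Matrix α β ℝ) (B : Matrix β γ ℝ)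
    (hA : ∀ i j, 0 ≤ A i j) (hB : ∀ i j, 0 ≤ B i j) {i : α} {j : β} {k : γ}
    (h1 : 0 < A i j) (h2 : 0 < B j k) : 0 < (A * B) i k :=
  lt_of_lt_of_le (mul_pos h1 h2) (entry_mul_le A B hA hB i j k)

end StochCompAux

open StochCompAux

theorem stochastic_complement_irreducible_stochastic
    {S : Type*} [Fintype S] [DecidableEq S]
    (P : Matrix S S ℝ) (C : Finset S)
    (hpos : ∀ i j, 0 ≤ P i j) (hrow : ∀ i, ∑ j, P i j = 1)
    (hirr : ∀ i j : S, ∃ n : ℕ, 0 < (P ^ n) i j) :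
    let Pkk : Matrix {x // x ∈ C} {x // x ∈ C} ℝ := fun i j => P i.1 j.1
    let Pk : Matrix {x // x ∉ C} {x // x ∉ C} ℝ := fun i j => P i.1 j.1
    let Pks : Matrix {x // x ∈ C} {x // x ∉ C} ℝ := fun i j => P i.1 j.1
    let Psk : Matrix {x // x ∉ C} {x // x ∈ C} ℝ := fun i j => P i.1 j.1
    let Skk : Matrix {x // x ∈ C} {x // x ∈ C} ℝ := Pkk + Pks * (1 - Pk)⁻¹ * Psk
    (∀ i j, 0 ≤ Skk i j) ∧ (∀ i, ∑ j, Skk i j = 1) ∧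
      (∀ i j, ∃ n : ℕ, 0 < (Skk ^ n) i j) := by
  intro Pkk Pk Pks Psk Skk
  rcases C.eq_empty_or_nonempty with hC | ⟨c, hc⟩
  · have hE : IsEmpty {x // x ∈ C} := ⟨fun x => by simp [hC] at x; exact absurd x.2 (by simp [hC])⟩
    exact ⟨fun i => isEmptyElim i, fun i => isEmptyElim i, fun i => isEmptyElim i⟩
  -- basic nonnegativity facts
  have hPpow0 : ∀ (n : ℕ) (i j : S), 0 ≤ (P ^ n) i j := pow_entry_nonneg P hpos
  have hQ0 : ∀ i j, 0 ≤ Pk i j := fun i j => hpos _ _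
  have hQpow0 : ∀ (n : ℕ) (i j : {x // x ∉ C}), 0 ≤ (Pk ^ n) i j := pow_entry_nonneg Pk hQ0
  have hPks0 : ∀ i j, 0 ≤ Pks i j := fun i j => hpos _ _
  have hPsk0 : ∀ i j, 0 ≤ Psk i j := fun i j => hpos _ _
  -- subtype sums
  have hsubC : ∀ (f : S → ℝ), ∑ j : {x // x ∈ C}, f j.1 = ∑ j ∈ C, f j :=
    fun f => (Finset.sum_subtype C (fun x => Iff.rfl) f).symm
  have hsubD : ∀ (f : S → ℝ), ∑ j : {x // x ∉ C}, f j.1 = ∑ j ∈ Cᶜ, f j :=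
    fun f => (Finset.sum_subtype Cᶜ (fun x => Finset.mem_compl) f).symm
  -- row sums of powers of P equal 1
  have hProw : ∀ (n : ℕ) (i : S), ∑ j, (P ^ n) i j = 1 := by
    intro n
    induction n with
    | zero => intro i; simp [Matrix.one_apply]
    | succ n ih =>
      intro i
      rw [pow_succ']
      simp only [Matrix.mul_apply]
      rw [Finset.sum_comm]
      calc ∑ k, ∑ j, P i k * (P ^ n) k j = ∑ k, P i k * ∑ j, (P ^ n) k j := by
            simp [Finset.mul_sum]
        _ = 1 := by simp [ih, hrow i]
  -- powers of Pk are dominated by powers of P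
  have hQP : ∀ (n : ℕ) (d e : {x // x ∉ C}), (Pk ^ n) d e ≤ (P ^ n) d.1 e.1 := by
    intro n
    induction n with
    | zero =>
      intro d e
      rcases eq_or_ne d e with rfl | hne
      · simp [Matrix.one_apply]
      · rw [pow_zero, pow_zero, Matrix.one_apply_ne hne,
          Matrix.one_apply_ne (fun h => hne (Subtype.ext h))]
    | succ n ih =>
      intro d e
      rw [pow_succ, pow_succ, Matrix.mul_apply, Matrix.mul_apply]
      have step1 : ∑ f : {x // x ∉ C}, (Pk ^ n) d f * Pk f e
          ≤ ∑ f : {x // x ∉ C}, (P ^ n) d.1 f.1 * P f.1 e.1 := by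
        apply Finset.sum_le_sum
        intro f _
        exact mul_le_mul_of_nonneg_right (ih d f) (hpos f.1 e.1)
      refine le_trans step1 ?_
      rw [hsubD (fun x => (P ^ n) d.1 x * P x e.1)]
      exact Finset.sum_le_sum_of_subset_of_nonneg (Finset.subset_univ _)
        (fun x _ _ => mul_nonneg (hPpow0 n d.1 x) (hpos x e.1))
  -- row sums of powers of Pk are at most 1
  have hQrow_le : ∀ (n : ℕ) (d : {x // x ∉ C}), ∑ e, (Pk ^ n) d e ≤ 1 := by
    intro n d
    calc ∑ e, (Pk ^ n) d e ≤ ∑ e : {x // x ∉ C}, (P ^ n) d.1 e.1 :=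
          Finset.sum_le_sum fun e _ => hQP n d e
      _ = ∑ e ∈ Cᶜ, (P ^ n) d.1 e := hsubD _
      _ ≤ ∑ e, (P ^ n) d.1 e := Finset.sum_le_sum_of_subset_of_nonneg
          (Finset.subset_univ _) (fun x _ _ => hPpow0 n d.1 x)
      _ = 1 := hProw n d.1
  -- row sums of powers of Pk are monotone decreasing
  have hQmono : ∀ (a b : ℕ) (d : {x // x ∉ C}),
      ∑ e, (Pk ^ (a + b)) d e ≤ ∑ e, (Pk ^ a) d e := by
    intro a b d
    rw [pow_add]
    simp only [Matrix.mul_apply]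
    rw [Finset.sum_comm]
    calc ∑ f, ∑ e, (Pk ^ a) d f * (Pk ^ b) f e
        = ∑ f, (Pk ^ a) d f * ∑ e, (Pk ^ b) f e := by simp [Finset.mul_sum]
      _ ≤ ∑ f, (Pk ^ a) d f * 1 := Finset.sum_le_sum fun f _ =>
          mul_le_mul_of_nonneg_left (hQrow_le b f) (hQpow0 a d f)
      _ = ∑ f, (Pk ^ a) d f := by simp
  -- for every d there is n with strict row sum deficit
  have hex : ∀ d : {x // x ∉ C}, ∃ n, ∑ e, (Pk ^ n) d e < 1 := by
    intro d
    obtain ⟨n, hn⟩ := hirr d.1 c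
    refine ⟨n, ?_⟩
    have h1 : ∑ e, (Pk ^ n) d e ≤ ∑ e ∈ Cᶜ, (P ^ n) d.1 e := by
      calc ∑ e, (Pk ^ n) d e ≤ ∑ e : {x // x ∉ C}, (P ^ n) d.1 e.1 :=
            Finset.sum_le_sum fun e _ => hQP n d e
        _ = ∑ e ∈ Cᶜ, (P ^ n) d.1 e := hsubD _
    have h2 : ∑ e ∈ C, (P ^ n) d.1 e + ∑ e ∈ Cᶜ, (P ^ n) d.1 e = 1 := by
      rw [Finset.sum_add_sum_compl]; exact hProw n d.1
    have h3 : 0 < ∑ e ∈ C, (P ^ n) d.1 e :=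
      lt_of_lt_of_le hn (Finset.single_le_sum (fun x _ => hPpow0 n d.1 x) hc)
    linarith
  choose f hf using hex
  set N := Finset.univ.sup f with hN
  have hNlt : ∀ d : {x // x ∉ C}, ∑ e, (Pk ^ N) d e < 1 := by
    intro d
    have hle : f d ≤ N := Finset.le_sup (Finset.mem_univ d)
    have := hQmono (f d) (N - f d) d
    rw [Nat.add_sub_cancel' hle] at this
    exact lt_of_le_of_lt this (hf d)
  -- invertibility of 1 - Pk
  have hinv : IsUnit (1 - Pk).det := by
    rw [isUnit_iff_ne_zero]
    intro hdet
    obtain ⟨v, hv0, hv⟩ := Matrix.exists_mulVec_eq_zero_iff.mpr hdet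
    have hQv : Pk *ᵥ v = v := by
      have := hv
      rw [Matrix.sub_mulVec, Matrix.one_mulVec, sub_eq_zero] at this
      exact this.symm
    have hQnv : ∀ n, (Pk ^ n) *ᵥ v = v := by
      intro n
      induction n with
      | zero => simp
      | succ n ih => rw [pow_succ', ← Matrix.mulVec_mulVec, ih, hQv]
    obtain ⟨d, hd⟩ := Function.ne_iff.mp hv0
    obtain ⟨d₀, -, hmax⟩ := Finset.exists_max_image Finset.univ (fun x => |v x|)
      ⟨d, Finset.mem_univ d⟩
    have hpos0 : 0 < |v d₀| :=
      lt_of_lt_of_le (abs_pos.mpr hd) (hmax d (Finset.mem_univ d))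
    have hcon : |v d₀| < |v d₀| := by
      conv_lhs => rw [← hQnv N]
      calc |((Pk ^ N) *ᵥ v) d₀| = |∑ e, (Pk ^ N) d₀ e * v e| := by
            rw [Matrix.mulVec, dotProduct]
        _ ≤ ∑ e, |(Pk ^ N) d₀ e * v e| := Finset.abs_sum_le_sum_abs _ _
        _ = ∑ e, (Pk ^ N) d₀ e * |v e| := by
            refine Finset.sum_congr rfl fun e _ => ?_
            rw [abs_mul, abs_of_nonneg (hQpow0 N d₀ e)]
        _ ≤ ∑ e, (Pk ^ N) d₀ e * |v d₀| := Finset.sum_le_sum fun e _ =>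
            mul_le_mul_of_nonneg_left (hmax e (Finset.mem_univ e)) (hQpow0 N d₀ e)
        _ = (∑ e, (Pk ^ N) d₀ e) * |v d₀| := by rw [Finset.sum_mul]
        _ < 1 * |v d₀| := mul_lt_mul_of_pos_right (hNlt d₀) hpos0
        _ = |v d₀| := one_mul _
    exact lt_irrefl _ hcon
  set B := (1 - Pk)⁻¹ with hBdef
  have hB1 : (1 - Pk) * B = 1 := Matrix.mul_nonsing_inv _ hinv
  have hB2 : B * (1 - Pk) = 1 := Matrix.nonsing_inv_mul _ hinv
  -- geometric series identity
  have hgeom : ∀ m : ℕ, (1 - Pk) * (∑ k ∈ Finset.range m, Pk ^ k) = 1 - Pk ^ m := by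
    intro m
    induction m with
    | zero => simp
    | succ m ih =>
      rw [Finset.sum_range_succ, mul_add, ih, sub_mul, one_mul, ← pow_succ']
      abel
  have hBiden : ∀ m : ℕ, B = (∑ k ∈ Finset.range m, Pk ^ k) + Pk ^ m * B := by
    intro m
    have hcomm : (1 - Pk) * Pk ^ m = Pk ^ m * (1 - Pk) := by
      rw [sub_mul, mul_sub, one_mul, mul_one, ← pow_succ, ← pow_succ']
    have h1 : (1 - Pk) * ((∑ k ∈ Finset.range m, Pk ^ k) + Pk ^ m * B) = 1 := by
      rw [mul_add, hgeom, ← mul_assoc, hcomm, mul_assoc, hB1, mul_one]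
      abel
    calc B = B * ((1 - Pk) * ((∑ k ∈ Finset.range m, Pk ^ k) + Pk ^ m * B)) := by
            rw [h1, mul_one]
      _ = (B * (1 - Pk)) * ((∑ k ∈ Finset.range m, Pk ^ k) + Pk ^ m * B) := by
            rw [mul_assoc]
      _ = (∑ k ∈ Finset.range m, Pk ^ k) + Pk ^ m * B := by rw [hB2, one_mul]
  -- B dominates all powers of Pk entrywise
  have hBge : ∀ (m : ℕ) (d e : {x // x ∉ C}), (Pk ^ m) d e ≤ B d e := by
    intro m d e
    have hne : (Finset.univ : Finset {x // x ∉ C}).Nonempty := ⟨d, Finset.mem_univ d⟩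
    set r : ℝ := Finset.univ.sup' hne (fun x => ∑ e, (Pk ^ N) x e) with hrdef
    have hr1 : r < 1 := by
      rw [hrdef, Finset.sup'_lt_iff]
      exact fun x _ => hNlt x
    have hr0 : 0 ≤ r := le_trans
      (Finset.sum_nonneg fun x _ => hQpow0 N d x) (Finset.le_sup' (fun x => ∑ e, (Pk ^ N) x e) (Finset.mem_univ d))
    have hrk : ∀ (k : ℕ) (x : {x // x ∉ C}), ∑ e, (Pk ^ (N * k)) x e ≤ r ^ k := by
      intro k
      induction k with
      | zero => intro x; simpa using hQrow_le 0 x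
      | succ k ih =>
        intro x
        have : N * (k + 1) = N + N * k := by ring
        rw [this, pow_add]
        simp only [Matrix.mul_apply]
        rw [Finset.sum_comm]
        calc ∑ g, ∑ e, (Pk ^ N) x g * (Pk ^ (N * k)) g e
            = ∑ g, (Pk ^ N) x g * ∑ e, (Pk ^ (N * k)) g e := by simp [Finset.mul_sum]
          _ ≤ ∑ g, (Pk ^ N) x g * r ^ k := Finset.sum_le_sum fun g _ =>
              mul_le_mul_of_nonneg_left (ih g) (hQpow0 N x g)
          _ = (∑ g, (Pk ^ N) x g) * r ^ k := by rw [Finset.sum_mul]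
          _ ≤ r * r ^ k := mul_le_mul_of_nonneg_right
              (Finset.le_sup' (fun x => ∑ e, (Pk ^ N) x e) (Finset.mem_univ x)) (pow_nonneg hr0 k)
          _ = r ^ (k + 1) := (pow_succ' r k).symm
    set Mb : ℝ := Finset.univ.sup' hne (fun x => |B x e|) with hMbdef
    have hMb0 : 0 ≤ Mb := le_trans (abs_nonneg (B d e)) (Finset.le_sup' (fun x => |B x e|) (Finset.mem_univ d))
    have key : ∀ k : ℕ, (Pk ^ m) d e ≤ B d e + Mb * r ^ k := by
      intro k
      set M : ℕ := N * k + (m + 1) with hMdef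
      have hiden := hBiden M
      have hSsum : (Pk ^ m) d e ≤ (∑ i ∈ Finset.range M, Pk ^ i) d e := by
        rw [Matrix.sum_apply]
        refine Finset.single_le_sum (f := fun i => (Pk ^ i) d e)
          (fun i _ => hQpow0 i d e) ?_
        rw [Finset.mem_range, hMdef]; omega
      have hT : |(Pk ^ M * B) d e| ≤ Mb * r ^ k := by
        rw [Matrix.mul_apply]
        calc |∑ g, (Pk ^ M) d g * B g e| ≤ ∑ g, |(Pk ^ M) d g * B g e| :=
              Finset.abs_sum_le_sum_abs _ _
          _ = ∑ g, (Pk ^ M) d g * |B g e| := by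
              refine Finset.sum_congr rfl fun g _ => ?_
              rw [abs_mul, abs_of_nonneg (hQpow0 M d g)]
          _ ≤ ∑ g, (Pk ^ M) d g * Mb := Finset.sum_le_sum fun g _ =>
              mul_le_mul_of_nonneg_left (Finset.le_sup' (fun x => |B x e|) (Finset.mem_univ g)) (hQpow0 M d g)
          _ = (∑ g, (Pk ^ M) d g) * Mb := by rw [Finset.sum_mul]
          _ ≤ r ^ k * Mb := by
              refine mul_le_mul_of_nonneg_right ?_ hMb0
              refine le_trans ?_ (hrk k d)
              have := hQmono (N * k) (m + 1) d
              rwa [hMdef]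
          _ = Mb * r ^ k := mul_comm _ _
      have hBde : B d e = (∑ i ∈ Finset.range M, Pk ^ i) d e + (Pk ^ M * B) d e := by
        conv_lhs => rw [hiden]
        rw [Matrix.add_apply]
      have := neg_abs_le ((Pk ^ M * B) d e)
      linarith
    have hlim : Filter.Tendsto (fun k : ℕ => B d e + Mb * r ^ k) Filter.atTop
        (nhds (B d e)) := by
      have h1 : Filter.Tendsto (fun k : ℕ => r ^ k) Filter.atTop (nhds 0) :=
        tendsto_pow_atTop_nhds_zero_of_lt_one hr0 hr1
      have h2 := (tendsto_const_nhds (x := B d e) (f := Filter.atTop)).add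
        ((tendsto_const_nhds (x := Mb) (f := Filter.atTop)).mul h1)
      simpa using h2
    exact ge_of_tendsto' hlim key
  have hB0 : ∀ d e, 0 ≤ B d e := fun d e => le_trans (hQpow0 0 d e) (hBge 0 d e)
  -- part 1: nonnegativity of Skk
  have hS0 : ∀ i j, 0 ≤ Skk i j := by
    intro i j
    show 0 ≤ (Pkk + Pks * B * Psk) i j
    rw [Matrix.add_apply]
    exact add_nonneg (hpos i.1 j.1)
      (mul_entry_nonneg (Pks * B) Psk (mul_entry_nonneg Pks B hPks0 hB0) hPsk0 i j)
  -- part 2: row sums of Skk equal 1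
  have hSrow : ∀ i, ∑ j, Skk i j = 1 := by
    intro i
    have hu : ∀ e : {x // x ∉ C}, ∑ f, (1 - Pk) e f = ∑ j : {x // x ∈ C}, P e.1 j.1 := by
      intro e
      have h1 : ∑ f, (1 - Pk) e f = 1 - ∑ f, Pk e f := by
        simp [Matrix.sub_apply, Finset.sum_sub_distrib, Matrix.one_apply]
      have h2 : ∑ f : {x // x ∉ C}, Pk e f = ∑ f ∈ Cᶜ, P e.1 f := hsubD _
      have h3 : ∑ f ∈ C, P e.1 f + ∑ f ∈ Cᶜ, P e.1 f = 1 := by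
        rw [Finset.sum_add_sum_compl]; exact hrow e.1
      have h4 : ∑ j : {x // x ∈ C}, P e.1 j.1 = ∑ j ∈ C, P e.1 j := hsubC _
      rw [h1, h2, h4]; linarith
    have hBu : ∀ d : {x // x ∉ C}, ∑ e, B d e * ∑ j : {x // x ∈ C}, P e.1 j.1 = 1 := by
      intro d
      calc ∑ e, B d e * ∑ j : {x // x ∈ C}, P e.1 j.1
          = ∑ e, B d e * ∑ f, (1 - Pk) e f := by
            refine Finset.sum_congr rfl fun e _ => ?_; rw [hu e]
        _ = ∑ e, ∑ f, B d e * (1 - Pk) e f := by simp only [Finset.mul_sum]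
        _ = ∑ f, ∑ e, B d e * (1 - Pk) e f := Finset.sum_comm
        _ = ∑ f, (B * (1 - Pk)) d f := by simp [Matrix.mul_apply]
        _ = ∑ f : {x // x ∉ C}, (1 : Matrix _ _ ℝ) d f := by rw [hB2]
        _ = 1 := by simp [Matrix.one_apply]
    have hsplit : ∑ j, Skk i j = ∑ j, Pkk i j + ∑ j, (Pks * B * Psk) i j := by
      show ∑ j, (Pkk + Pks * B * Psk) i j = _
      simp [Matrix.add_apply, Finset.sum_add_distrib]
    have hfirst : ∑ j : {x // x ∈ C}, Pkk i j = ∑ j ∈ C, P i.1 j := hsubC _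
    have hsecond : ∑ j, (Pks * B * Psk) i j = ∑ d ∈ Cᶜ, P i.1 d := by
      calc ∑ j, (Pks * B * Psk) i j
          = ∑ j, ∑ e, (Pks * B) i e * Psk e j := by simp [Matrix.mul_apply]
        _ = ∑ e, ∑ j, (Pks * B) i e * Psk e j := Finset.sum_comm
        _ = ∑ e, (Pks * B) i e * ∑ j : {x // x ∈ C}, P e.1 j.1 := by
            simp [Finset.mul_sum]; rfl
        _ = ∑ e, (∑ d, Pks i d * B d e) * ∑ j : {x // x ∈ C}, P e.1 j.1 := by
            simp [Matrix.mul_apply]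
        _ = ∑ e, ∑ d, Pks i d * B d e * ∑ j : {x // x ∈ C}, P e.1 j.1 := by
            simp [Finset.sum_mul]
        _ = ∑ d, ∑ e, Pks i d * B d e * ∑ j : {x // x ∈ C}, P e.1 j.1 := Finset.sum_comm
        _ = ∑ d, Pks i d * ∑ e, B d e * ∑ j : {x // x ∈ C}, P e.1 j.1 := by
            simp [Finset.mul_sum, mul_assoc]
        _ = ∑ d : {x // x ∉ C}, Pks i d := by
            refine Finset.sum_congr rfl fun d _ => ?_; rw [hBu d, mul_one]
        _ = ∑ d ∈ Cᶜ, P i.1 d := hsubD _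
    have h3 : ∑ j ∈ C, P i.1 j + ∑ j ∈ Cᶜ, P i.1 j = 1 := by
      rw [Finset.sum_add_sum_compl]; exact hrow i.1
    rw [hsplit, hfirst, hsecond]; linarith
  -- part 3: irreducibility
  have hSpow0 : ∀ (m : ℕ) (i j : {x // x ∈ C}), 0 ≤ (Skk ^ m) i j := pow_entry_nonneg Skk hS0
  have hSgeP : ∀ i k : {x // x ∈ C}, Pkk i k ≤ Skk i k := by
    intro i k
    show Pkk i k ≤ (Pkk + Pks * B * Psk) i k
    rw [Matrix.add_apply]
    exact le_add_of_nonneg_right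
      (mul_entry_nonneg (Pks * B) Psk (mul_entry_nonneg Pks B hPks0 hB0) hPsk0 i k)
  have hQrPsk0 : ∀ (r : ℕ) (a : {x // x ∉ C}) (b : {x // x ∈ C}),
      0 ≤ (Pk ^ r * Psk) a b := fun r => mul_entry_nonneg _ _ (hQpow0 r) hPsk0
  have hSge : ∀ (r : ℕ) (i k : {x // x ∈ C}), (Pks * (Pk ^ r * Psk)) i k ≤ Skk i k := by
    intro r i k
    have h1 : (Pks * (Pk ^ r * Psk)) i k ≤ (Pks * B * Psk) i k := by
      rw [← Matrix.mul_assoc, Matrix.mul_apply, Matrix.mul_apply]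
      refine Finset.sum_le_sum fun e _ => ?_
      refine mul_le_mul_of_nonneg_right ?_ (hPsk0 e k)
      rw [Matrix.mul_apply, Matrix.mul_apply]
      exact Finset.sum_le_sum fun d _ =>
        mul_le_mul_of_nonneg_left (hBge r d e) (hPks0 i d)
    refine le_trans h1 ?_
    show (Pks * B * Psk) i k ≤ (Pkk + Pks * B * Psk) i k
    rw [Matrix.add_apply]
    exact le_add_of_nonneg_left (hpos i.1 k.1)
  have key : ∀ n : ℕ,
      (∀ i j : {x // x ∈ C}, 0 < (P ^ n) i.1 j.1 → ∃ m, 0 < (Skk ^ m) i j) ∧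
      (∀ (d : {x // x ∉ C}) (j : {x // x ∈ C}), 0 < (P ^ n) d.1 j.1 →
        ∃ r m, 0 < (((Pk ^ r * Psk) * Skk ^ m : Matrix {x // x ∉ C} {x // x ∈ C} ℝ)) d j) := by
    intro n
    induction n with
    | zero =>
      constructor
      · intro i j h
        rw [pow_zero] at h
        have hij : i.1 = j.1 := by
          by_contra hne
          rw [Matrix.one_apply_ne hne] at h
          exact lt_irrefl 0 h
        refine ⟨0, ?_⟩
        rw [pow_zero, Subtype.ext hij, Matrix.one_apply_eq]
        norm_num
      · intro d j h
        rw [pow_zero] at h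
        have hne : d.1 ≠ j.1 := fun hh => d.2 (hh ▸ j.2)
        rw [Matrix.one_apply_ne hne] at h
        exact absurd h (lt_irrefl 0)
    | succ n ih =>
      have hstep : ∀ a b : S, 0 < (P ^ (n + 1)) a b → ∃ k, 0 < P a k ∧ 0 < (P ^ n) k b := by
        intro a b h
        rw [pow_succ'] at h
        exact exists_pos_entry P (P ^ n) hpos (hPpow0 n) h
      constructor
      · intro i j h
        obtain ⟨k, hk1, hk2⟩ := hstep i.1 j.1 h
        by_cases hkC : k ∈ C
        · obtain ⟨m, hm⟩ := ih.1 ⟨k, hkC⟩ j hk2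
          refine ⟨m + 1, ?_⟩
          have hk1' : (0:ℝ) < Pkk i ⟨k, hkC⟩ := hk1
          have hSik : 0 < Skk i ⟨k, hkC⟩ := lt_of_lt_of_le hk1' (hSgeP i ⟨k, hkC⟩)
          rw [pow_succ']
          exact entry_pos_of_pos_pos Skk (Skk ^ m) hS0 (hSpow0 m) hSik hm
        · obtain ⟨r, m, hrm⟩ := ih.2 ⟨k, hkC⟩ j hk2
          obtain ⟨e, he1, he2⟩ := exists_pos_entry (Pk ^ r * Psk) (Skk ^ m)
            (hQrPsk0 r) (hSpow0 m) hrm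
          have hSie : 0 < Skk i e := by
            refine lt_of_lt_of_le ?_ (hSge r i e)
            have hk1' : (0:ℝ) < Pks i ⟨k, hkC⟩ := hk1
            exact entry_pos_of_pos_pos Pks (Pk ^ r * Psk) hPks0 (hQrPsk0 r) hk1' he1
          refine ⟨m + 1, ?_⟩
          rw [pow_succ']
          exact entry_pos_of_pos_pos Skk (Skk ^ m) hS0 (hSpow0 m) hSie he2
      · intro d j h
        obtain ⟨k, hk1, hk2⟩ := hstep d.1 j.1 h
        by_cases hkC : k ∈ C
        · obtain ⟨m, hm⟩ := ih.1 ⟨k, hkC⟩ j hk2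
          refine ⟨0, m, ?_⟩
          have h0 : (Pk ^ 0 * Psk : Matrix _ _ ℝ) = Psk := by
            rw [pow_zero, Matrix.one_mul]
          rw [h0]
          have hk1' : (0:ℝ) < Psk d ⟨k, hkC⟩ := hk1
          exact entry_pos_of_pos_pos Psk (Skk ^ m) hPsk0 (hSpow0 m) hk1' hm
        · obtain ⟨r, m, hrm⟩ := ih.2 ⟨k, hkC⟩ j hk2
          refine ⟨r + 1, m, ?_⟩
          have hassoc : (Pk ^ (r + 1) * Psk) * Skk ^ m
              = Pk * ((Pk ^ r * Psk) * Skk ^ m) := by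
            simp only [pow_succ', Matrix.mul_assoc]
          rw [hassoc]
          have hk1' : (0:ℝ) < Pk d ⟨k, hkC⟩ := hk1
          refine entry_pos_of_pos_pos Pk ((Pk ^ r * Psk) * Skk ^ m) hQ0 ?_ hk1' hrm
          exact fun a b => mul_entry_nonneg _ _ (hQrPsk0 r) (hSpow0 m) a b
  refine ⟨hS0, hSrow, ?_⟩
  intro i j
  obtain ⟨n, hn⟩ := hirr i.1 j.1
  exact (key n).1 i j hn
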